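/- Let f : E → ℝ be differentiable with L-Lipschitz gradient (L > 0). Let λ_k ∈ S, β > 0, and let λ₊ ∈ S minimize λ ↦ ⟨λ, ∇f(λ_k)⟩ + h(λ) + (1/β)·D(λ, λ_k) over S. Assume h is convex on S and differentiable at λ₊, the map λ ↦ D(λ, λ_k) is differentiable at λ₊, and α > 0 satisfies ⟨λ₊ − λ_k, ∇₁D(λ₊, λ_k)⟩ ≥ α·‖λ₊ − λ_k‖². Then, with G := (λ_k − λ₊)/β, one has f(λ₊) + h(λ₊) ≤ f(λ_k) + h(λ_k) − (α·β − (L/2)·β²)·‖G‖²; equivalently, the lower bound 𝓛 := −(f + h) satisfies 𝓛(λ₊) − 𝓛(λ_k) ≥ (α·β − (L/2)·β²)·‖G‖². -/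

import Mathlib

open scoped RealInnerProductSpace Topology
open Filter

lemma line_hasDerivAt' {E : Type*} [NormedAddCommGroup E] [InnerProductSpace ℝ E] [CompleteSpace E]
    (F : E → ℝ) (p v : E) (t : ℝ) (hF : DifferentiableAt ℝ F (p + t • v)) :
    HasDerivAt (fun s : ℝ => F (p + s • v)) ⟪gradient F (p + t • v), v⟫ t := by
  have hline : HasDerivAt (fun s : ℝ => p + s • v) v t := by
    simpa using ((hasDerivAt_id t).smul_const v).const_add p
  have := hF.hasGradientAt.hasFDerivAt.comp_hasDerivAt t hline
  simpa [InnerProductSpace.toDual_apply_apply, Function.comp_def] using this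

lemma descent_lemma' {E : Type*} [NormedAddCommGroup E] [InnerProductSpace ℝ E] [CompleteSpace E]
    (f : E → ℝ) (L : ℝ) (hf : Differentiable ℝ f)
    (hlip : ∀ x y : E, ‖gradient f x - gradient f y‖ ≤ L * ‖x - y‖) (x y : E) :
    f y ≤ f x + ⟪gradient f x, y - x⟫ + L / 2 * ‖y - x‖ ^ 2 := by
  set v := y - x with hv
  set c : ℝ := ⟪gradient f x, v⟫ with hc
  set F : ℝ → ℝ := fun t => f (x + t • v) - t * c - L * t ^ 2 / 2 * ‖v‖ ^ 2 with hF
  have hder : ∀ t : ℝ, HasDerivAt F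
      (⟪gradient f (x + t • v), v⟫ - c - L * t * ‖v‖ ^ 2) t := by
    intro t
    have h1 := line_hasDerivAt' f x v t (hf _)
    have h2 : HasDerivAt (fun t : ℝ => t * c) c t := by simpa using (hasDerivAt_id t).mul_const c
    have h3 : HasDerivAt (fun t : ℝ => L * t ^ 2 / 2 * ‖v‖ ^ 2) (L * t * ‖v‖ ^ 2) t := by
      have h4 : HasDerivAt (fun t : ℝ => t ^ 2) (2 * t) t := by
        simpa using hasDerivAt_pow 2 t
      have h5 := ((h4.const_mul L).div_const 2).mul_const (‖v‖ ^ 2)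
      exact h5.congr_deriv (by ring)
    exact (h1.sub h2).sub h3
  have hdiffF : Differentiable ℝ F := fun t => (hder t).differentiableAt
  have hmono : AntitoneOn F (Set.Icc 0 1) := by
    apply antitoneOn_of_deriv_nonpos (convex_Icc 0 1) hdiffF.continuous.continuousOn
      (hdiffF.differentiableOn.mono interior_subset)
    intro t ht
    rw [interior_Icc] at ht
    rw [(hder t).deriv]
    have hb : ⟪gradient f (x + t • v), v⟫ - c ≤ L * t * ‖v‖ ^ 2 := by
      rw [hc, ← inner_sub_left]
      calc ⟪gradient f (x + t • v) - gradient f x, v⟫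
          ≤ ‖gradient f (x + t • v) - gradient f x‖ * ‖v‖ := real_inner_le_norm _ _
        _ ≤ (L * ‖(x + t • v) - x‖) * ‖v‖ := by
            gcongr; exact hlip _ _
        _ = L * t * ‖v‖ ^ 2 := by
            rw [add_sub_cancel_left, norm_smul, Real.norm_eq_abs, abs_of_pos ht.1]
            ring
    linarith
  have hF10 : F 1 ≤ F 0 := hmono (by norm_num) (by norm_num) zero_le_one
  have e1 : F 1 = f y - c - L / 2 * ‖v‖ ^ 2 := by
    show f (x + (1:ℝ) • v) - 1 * c - L * 1 ^ 2 / 2 * ‖v‖ ^ 2 = _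
    rw [one_smul, hv, show x + (y - x) = y by abel]
    ring
  have e0 : F 0 = f x := by simp [hF]
  rw [e1, e0] at hF10
  linarith

lemma slope_limit' {ψ : ℝ → ℝ} {d C : ℝ} (hψ : HasDerivAt ψ d 0)
    (hC : ∀ t ∈ Set.Ioc (0:ℝ) 1, C ≤ (ψ t - ψ 0) / t) : C ≤ d := by
  have htend : Filter.Tendsto (slope ψ 0) (𝓝[≠] (0:ℝ)) (𝓝 d) :=
    hasDerivAt_iff_tendsto_slope.mp hψ
  have hmem : Set.Ioi (0:ℝ) ⊆ {(0:ℝ)}ᶜ := fun x hx => ne_of_gt hx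
  have htend' : Filter.Tendsto (slope ψ 0) (𝓝[>] (0:ℝ)) (𝓝 d) :=
    htend.mono_left (nhdsWithin_mono 0 hmem)
  refine ge_of_tendsto htend' ?_
  filter_upwards [Ioc_mem_nhdsGT_of_mem (by norm_num : (0:ℝ) ∈ Set.Ico (0:ℝ) 1)] with t ht
  have := hC t ht
  simpa [slope_def_field] using this

theorem stmt_1 {E : Type*} [NormedAddCommGroup E] [InnerProductSpace ℝ E] [CompleteSpace E]
    (S : Set E) (hS : Convex ℝ S)
    (h : E → ℝ) (D : E → E → ℝ)
    (f : E → ℝ) (L : ℝ) (hL : 0 < L)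
    (hf : Differentiable ℝ f)
    (hlip : ∀ x y : E, ‖gradient f x - gradient f y‖ ≤ L * ‖x - y‖)
    (lamk : E) (hlamkS : lamk ∈ S) (β : ℝ) (hβ : 0 < β)
    (lamp : E) (hlampS : lamp ∈ S)
    (hmin : ∀ y ∈ S,
      ⟪lamp, gradient f lamk⟫ + h lamp + (1 / β) * D lamp lamk ≤
        ⟪y, gradient f lamk⟫ + h y + (1 / β) * D y lamk)
    (hconv : ConvexOn ℝ S h) (hdiff : DifferentiableAt ℝ h lamp)
    (hDdiff : DifferentiableAt ℝ (fun x => D x lamk) lamp)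
    (α : ℝ) (hα : 0 < α)
    (hA6 : ⟪lamp - lamk, gradient (fun x => D x lamk) lamp⟫ ≥ α * ‖lamp - lamk‖ ^ 2) :
    f lamp + h lamp ≤ f lamk + h lamk -
      (α * β - (L / 2) * β ^ 2) * ‖(1 / β) • (lamk - lamp)‖ ^ 2 := by
  set g := gradient f lamk with hg
  set v := lamk - lamp with hv
  set gD := gradient (fun x => D x lamk) lamp with hgD
  set ψ : ℝ → ℝ := fun t => D (lamp + t • v) lamk with hψdef
  -- derivative of ψ at 0
  have hD0 : DifferentiableAt ℝ (fun x => D x lamk) (lamp + (0:ℝ) • v) := by simpa using hDdiff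
  have hψ : HasDerivAt ψ ⟪gD, v⟫ 0 := by
    have := line_hasDerivAt' (fun x => D x lamk) lamp v 0 hD0
    simpa [hgD] using this
  set C : ℝ := -β * (⟪v, g⟫ + h lamk - h lamp) with hC
  have hslope : ∀ t ∈ Set.Ioc (0:ℝ) 1, C ≤ (ψ t - ψ 0) / t := by
    intro t ht
    have hmem : lamp + t • v ∈ S := by
      have := hS hlampS hlamkS (by linarith [ht.2] : (0:ℝ) ≤ 1 - t) (le_of_lt ht.1)
        (by ring)
      convert this using 1
      rw [hv]; module
    have hmin' := hmin _ hmem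
    have hinner : ⟪lamp + t • v, g⟫ = ⟪lamp, g⟫ + t * ⟪v, g⟫ := by
      rw [inner_add_left, real_inner_smul_left]
    have hconv' : h (lamp + t • v) ≤ (1 - t) * h lamp + t * h lamk := by
      have := hconv.2 hlampS hlamkS (by linarith [ht.2] : (0:ℝ) ≤ 1 - t) (le_of_lt ht.1)
        (by ring)
      rw [smul_eq_mul, smul_eq_mul] at this
      rw [show lamp + t • v = (1 - t) • lamp + t • lamk by rw [hv]; module]
      exact this
    have hψ0 : ψ 0 = D lamp lamk := by simp [hψdef]
    have hψt : ψ t = D (lamp + t • v) lamk := rfl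
    rw [le_div_iff₀ ht.1, hC]
    have hβinv : (0:ℝ) < 1 / β := by positivity
    have key : (1 / β) * (ψ 0 - ψ t) ≤ t * ⟪v, g⟫ + t * (h lamk - h lamp) := by
      rw [hψ0, hψt]
      nlinarith [hmin', hconv', hinner]
    have : ψ 0 - ψ t ≤ β * (t * ⟪v, g⟫ + t * (h lamk - h lamp)) := by
      have h6 := mul_le_mul_of_nonneg_left key hβ.le
      rw [← mul_assoc, mul_one_div_cancel hβ.ne', one_mul] at h6
      exact h6
    nlinarith
  have hd : C ≤ ⟪gD, v⟫ := slope_limit' hψ hslope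
  -- A6 gives upper bound on ⟪gD, v⟫
  have hA6' : ⟪gD, v⟫ ≤ -(α * ‖v‖ ^ 2) := by
    have h1 : ⟪gD, v⟫ = -⟪lamp - lamk, gD⟫ := by
      rw [real_inner_comm, hv, show lamk - lamp = -(lamp - lamk) by abel, inner_neg_left]
    have h2 : ‖lamp - lamk‖ = ‖v‖ := by rw [hv, norm_sub_rev]
    rw [h1]
    rw [h2] at hA6
    linarith
  -- combine: β * (⟪v,g⟫ + h lamk - h lamp) ≥ α * ‖v‖²
  have hkey : α * ‖v‖ ^ 2 ≤ β * (⟪v, g⟫ + h lamk - h lamp) := by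
    have := hd.trans hA6'
    nlinarith
  -- descent lemma
  have hdesc := descent_lemma' f L hf hlip lamk lamp
  have hinn : ⟪g, lamp - lamk⟫ = -⟪v, g⟫ := by
    rw [real_inner_comm, hv, show lamp - lamk = -(lamk - lamp) by abel, inner_neg_left]
  have hnorm : ‖lamp - lamk‖ = ‖v‖ := by rw [hv, norm_sub_rev]
  rw [hinn, hnorm] at hdesc
  -- norm of scaled step
  have hns : ‖(1 / β) • v‖ ^ 2 = (1 / β) ^ 2 * ‖v‖ ^ 2 := by
    rw [norm_smul, Real.norm_eq_abs, abs_of_pos (by positivity : (0:ℝ) < 1 / β)]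
    ring
  have hcoef : (α * β - (L / 2) * β ^ 2) * ‖(1 / β) • v‖ ^ 2 = (α / β - L / 2) * ‖v‖ ^ 2 := by
    rw [hns]
    field_simp
  rw [hcoef]
  have hsplit : (α / β - L / 2) * ‖v‖ ^ 2 = α / β * ‖v‖ ^ 2 - L / 2 * ‖v‖ ^ 2 := by ring
  have hX : α / β * ‖v‖ ^ 2 ≤ ⟪v, g⟫ + (h lamk - h lamp) := by
    rw [div_mul_eq_mul_div, div_le_iff₀ hβ]
    nlinarith
  linarith
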